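/- Let k₀ ∈ ℕ, k₀ ≥ 4, and 2 ≤ n ≤ ⌊√k₀⌋ − 1. Then for every real k with k₀ < k < k₀ + 1, the set of integers n' such that the rectangle [n, n+1] × [n', n'+1] meets the hyperbola {(x,y) : xy = k} in more than one point is exactly {⌊k₀/(n+1)⌋, ⌊k₀/(n+1)⌋ + 1, …, ⌊k₀/n⌋}; in particular this set does not depend on k ∈ (k₀, k₀+1). -/
import Mathlib


set_option maxHeartbeats 2000000 in
/-- For k₀ ≥ 4, 2 ≤ n ≤ ⌊√k₀⌋ − 1, and any real k with k₀ < k < k₀+1, the set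
of integers n' for which [n,n+1] × [n',n'+1] meets the hyperbola xy = k in
more than one point is exactly {⌊k₀/(n+1)⌋, …, ⌊k₀/n⌋}; in particular it
does not depend on k ∈ (k₀, k₀+1). -/
theorem essential_regions_constant
    (k₀ n : ℕ) (hk₀ : 4 ≤ k₀) (hn : 2 ≤ n) (hn' : n ≤ Nat.sqrt k₀ - 1) :
    ∀ k : ℝ, (k₀ : ℝ) < k → k < (k₀ : ℝ) + 1 →
      {n' : ℕ |
        ((Set.Icc (n : ℝ) ((n : ℝ) + 1) ×ˢ Set.Icc (n' : ℝ) ((n' : ℝ) + 1)) ∩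
          {p : ℝ × ℝ | p.1 * p.2 = k}).Nontrivial}
        = Set.Icc (k₀ / (n + 1)) (k₀ / n) := by
  intro k hk1 hk2
  have hs2 : 2 ≤ Nat.sqrt k₀ := Nat.le_sqrt.mpr (by omega)
  have hns : n + 1 ≤ Nat.sqrt k₀ := by omega
  have hsq : (n+1)*(n+1) ≤ k₀ := by
    calc (n+1)*(n+1) ≤ Nat.sqrt k₀ * Nat.sqrt k₀ := Nat.mul_le_mul hns hns
    _ = Nat.sqrt k₀ ^ 2 := (pow_two _).symm
    _ ≤ k₀ := Nat.sqrt_le' k₀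
  have hk0pos : (0:ℝ) < k := by
    have : (0:ℝ) ≤ (k₀:ℝ) := Nat.cast_nonneg _
    linarith
  have hnR : (2:ℝ) ≤ (n:ℝ) := by exact_mod_cast hn
  ext n'
  simp only [Set.mem_setOf_eq, Set.mem_Icc]
  constructor
  · rintro ⟨⟨x₁,y₁⟩, ⟨⟨⟨hx1l,hx1r⟩,hy1l,hy1r⟩, hxy1⟩, ⟨x₂,y₂⟩, ⟨⟨⟨hx2l,hx2r⟩,hy2l,hy2r⟩, hxy2⟩, hne⟩
    simp only [Set.mem_setOf_eq] at hxy1 hxy2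
    -- derive real inequalities n*n' < k < (n+1)*(n'+1)
    have hx1pos : (0:ℝ) < x₁ := by linarith
    have hx2pos : (0:ℝ) < x₂ := by linarith
    have hy1pos : (0:ℝ) < y₁ := by
      nlinarith
    have hy2pos : (0:ℝ) < y₂ := by
      nlinarith
    have hn'0 : (0:ℝ) ≤ (n':ℝ) := Nat.cast_nonneg _
    have hne' : x₁ ≠ x₂ := by
      intro h
      apply hne
      have : y₁ = y₂ := by
        subst h
        have := hxy1.trans hxy2.symm
        exact mul_left_cancel₀ (ne_of_gt hx1pos) this
      simp [h, this]
    have key : (n:ℝ) * n' < k ∧ k < ((n:ℝ)+1) * ((n':ℝ)+1) := by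
      rcases lt_or_gt_of_ne hne' with h | h
      · have hy : y₂ < y₁ := by nlinarith [mul_pos (sub_pos.mpr h) hy1pos]
        have h1 : (n:ℝ)*n' ≤ x₁*y₂ := mul_le_mul hx1l hy2l hn'0 (by linarith)
        have h2 : x₁*y₂ < x₁*y₁ := by nlinarith
        have h3 : x₁*y₁ < x₂*y₁ := by nlinarith
        have h4 : x₂*y₁ ≤ ((n:ℝ)+1)*((n':ℝ)+1) := mul_le_mul hx2r hy1r hy1pos.le (by linarith)
        constructor
        · linarith
        · linarith
      · have hy : y₁ < y₂ := by nlinarith [mul_pos (sub_pos.mpr h) hy2pos]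
        have h1 : (n:ℝ)*n' ≤ x₂*y₁ := mul_le_mul hx2l hy1l hn'0 (by linarith)
        have h2 : x₂*y₁ < x₂*y₂ := by nlinarith
        have h3 : x₂*y₂ < x₁*y₂ := by nlinarith
        have h4 : x₁*y₂ ≤ ((n:ℝ)+1)*((n':ℝ)+1) := mul_le_mul hx1r hy2r hy2pos.le (by linarith)
        constructor
        · linarith
        · linarith
    obtain ⟨hA, hB⟩ := key
    -- convert to ℕ
    have hA' : n * n' ≤ k₀ := by
      have : ((n * n' : ℕ) : ℝ) < (k₀:ℝ) + 1 := by push_cast; linarith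
      have := Nat.lt_succ_iff.mp (by exact_mod_cast (by push_cast at this ⊢; linarith : ((n*n':ℕ):ℝ) < ((k₀+1:ℕ):ℝ)))
      exact this
    have hB' : k₀ < (n+1) * (n'+1) := by
      have : (k₀:ℝ) < (((n+1)*(n'+1) : ℕ) : ℝ) := by push_cast; linarith
      exact_mod_cast this
    constructor
    · have : k₀ / (n+1) < n' + 1 :=
        (Nat.div_lt_iff_lt_mul (by omega)).mpr (by rw [Nat.mul_comm]; exact hB')
      omega
    · exact (Nat.le_div_iff_mul_le (by omega)).mpr (by rw [Nat.mul_comm]; exact hA')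
  · rintro ⟨h1, h2⟩
    -- n' ≥ n+1 ≥ 3
    have hge : n + 1 ≤ k₀ / (n+1) := (Nat.le_div_iff_mul_le (by omega)).mpr hsq
    have hn'1 : 1 ≤ n' := by omega
    have hB' : k₀ < (n+1) * (n'+1) := by
      have : k₀ / (n+1) < n' + 1 := by omega
      have := (Nat.div_lt_iff_lt_mul (show 0 < n+1 by omega)).mp this
      rwa [Nat.mul_comm] at this
    have hA' : n * n' ≤ k₀ := by
      have := (Nat.le_div_iff_mul_le (show 0 < n by omega)).mp h2
      rwa [Nat.mul_comm] at this
    have hA : (n:ℝ) * n' < k := by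
      have : ((n*n' : ℕ):ℝ) ≤ (k₀:ℝ) := by exact_mod_cast hA'
      push_cast at this; linarith
    have hB : k < ((n:ℝ)+1) * ((n':ℝ)+1) := by
      have : ((k₀+1 : ℕ):ℝ) ≤ (((n+1)*(n'+1) : ℕ):ℝ) := by exact_mod_cast hB'
      push_cast at this; linarith
    have hn'R : (1:ℝ) ≤ (n':ℝ) := by exact_mod_cast hn'1
    have hn'pos : (0:ℝ) < (n':ℝ) := by linarith
    have hn'1pos : (0:ℝ) < (n':ℝ) + 1 := by linarith
    set a : ℝ := max (n:ℝ) (k/((n':ℝ)+1)) with ha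
    set b : ℝ := min ((n:ℝ)+1) (k/(n':ℝ)) with hb
    have hab : a < b := by
      apply max_lt <;> apply lt_min
      · linarith
      · rw [lt_div_iff₀ hn'pos]; linarith [hA]
      · rw [div_lt_iff₀ hn'1pos]; linarith [hB]
      · apply div_lt_div_of_pos_left hk0pos hn'pos; linarith
    have hapos : (0:ℝ) < a := lt_of_lt_of_le (by linarith) (le_max_left _ _)
    have hbpos : (0:ℝ) < b := hapos.trans hab
    have hbn1 : b ≤ (n:ℝ)+1 := min_le_left _ _
    have hna : (n:ℝ) ≤ a := le_max_left _ _
    have hak : k/((n':ℝ)+1) ≤ a := le_max_right _ _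
    have hbk : b ≤ k/(n':ℝ) := min_le_right _ _
    refine ⟨(a, k/a), ⟨⟨⟨hna, by linarith⟩, ?_, ?_⟩, ?_⟩,
            (b, k/b), ⟨⟨⟨by linarith, hbn1⟩, ?_, ?_⟩, ?_⟩, ?_⟩
    · -- n' ≤ k/a
      rw [le_div_iff₀ hapos]
      have : a * n' ≤ (k/(n':ℝ)) * n' := by nlinarith
      rw [div_mul_cancel₀ _ (ne_of_gt hn'pos)] at this
      linarith
    · -- k/a ≤ n'+1
      rw [div_le_iff₀ hapos]
      have : (k/((n':ℝ)+1)) * ((n':ℝ)+1) ≤ a * ((n':ℝ)+1) := by nlinarith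
      rw [div_mul_cancel₀ _ (ne_of_gt hn'1pos)] at this
      linarith
    · show a * (k/a) = k
      field_simp
    · rw [le_div_iff₀ hbpos]
      have : b * n' ≤ (k/(n':ℝ)) * n' := by nlinarith
      rw [div_mul_cancel₀ _ (ne_of_gt hn'pos)] at this
      linarith
    · rw [div_le_iff₀ hbpos]
      have : (k/((n':ℝ)+1)) * ((n':ℝ)+1) ≤ a * ((n':ℝ)+1) := by nlinarith
      rw [div_mul_cancel₀ _ (ne_of_gt hn'1pos)] at this
      nlinarith
    · show b * (k/b) = k
      field_simp
    · intro h
      have := congrArg Prod.fst h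
      simp at this
      exact absurd this (ne_of_lt hab)
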